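/- Lengths of shortcuts used by an antipodal pair: let k ∈ {4,5,6} and let a₁ ≥ a₂ ≥ … ≥ a_n be real numbers in (0,2] with a₁ + ⋯ + a_n ≤ π − δ*_k and δ(a₁) + ⋯ + δ(a_n) ≥ δ*_k/2. Then a₁ ≥ λ_k and a₂ + ⋯ + a_n ≤ σ_k. (In particular, if the shortest path between an antipodal pair of points of C uses the set S' of shortcuts and has length at most π − δ*_k, then the longest shortcut of S' has length at least λ_k and the remaining ones have total length at most σ_k.) -/

import Mathlib

open Real MeasureTheory

/-- Arc distance between points on the unit circle, given by their polar angles: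
the length of the shorter arc between them. -/
noncomputable def arcDist (p q : ℝ) : ℝ := ⨅ n : ℤ, |p - q + 2 * π * n|

/-- Euclidean length of the chord between the circle points with angles `u` and `v`. -/
noncomputable def chordLen (u v : ℝ) : ℝ := 2 * Real.sin (arcDist u v / 2)

/-- A pair of angles is a genuine shortcut (chord) if its endpoints are distinct points. -/
def IsShortcut (s : ℝ × ℝ) : Prop := arcDist s.1 s.2 ≠ 0

/-- δ(a) = arcsin(a/2) - a/2. -/
noncomputable def sdelta (a : ℝ) : ℝ := Real.arcsin (a / 2) - a / 2

/-- Cost of a path that starts at `p`, fully traverses the listed chords in order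
(travelling along the circle in between), and ends at `q`. -/
noncomputable def walkCost (q : ℝ) : ℝ → List (ℝ × ℝ) → ℝ
  | p, [] => arcDist p q
  | p, e :: L => arcDist p e.1 + chordLen e.1 e.2 + walkCost q e.2 L

/-- Shortest-path distance from `p` to `q` using the shortcuts of `S`
(each usable in either orientation, and always traversed completely). -/
noncomputable def dS (S : Finset (ℝ × ℝ)) (p q : ℝ) : ℝ :=
  sInf {c | ∃ L : List (ℝ × ℝ), (∀ e ∈ L, e ∈ S ∨ (e.2, e.1) ∈ S) ∧ c = walkCost q p L}

/-- Diameter of the circle augmented with the shortcuts of `S`. -/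
noncomputable def diamS (S : Finset (ℝ × ℝ)) : ℝ :=
  sSup {d | ∃ p q : ℝ, d = dS S p q}

/-- diam(k): the optimal diameter achievable with `k` shortcuts. -/
noncomputable def diamK (k : ℕ) : ℝ :=
  sInf {d | ∃ S : Finset (ℝ × ℝ), S.card = k ∧ (∀ s ∈ S, IsShortcut s) ∧ d = diamS S}

/-- Distance from `p` to `q` when a single shortcut with endpoints `u`, `v` is available. -/
noncomputable def dOne (u v p q : ℝ) : ℝ :=
  min (arcDist p q)
    (min (arcDist p u + chordLen u v + arcDist v q)
      (arcDist p v + chordLen u v + arcDist u q))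

/-- Two angles represent the same point of the circle. -/
def SamePoint (p q : ℝ) : Prop := arcDist p q = 0

/-- Two pairs of angles represent the same chord of the circle. -/
def SameChord (s t : ℝ × ℝ) : Prop :=
  (SamePoint s.1 t.1 ∧ SamePoint s.2 t.2) ∨ (SamePoint s.1 t.2 ∧ SamePoint s.2 t.1)

/-- `p` lies in the deep umbra of the shortcut from `u` to `u + β`
(where `0 < β ≤ π` is the counterclockwise arc spanned by the shortcut):
`p` lies in the inner umbra, and `|p u'| + |s| ≥ d(p, v')` where `u'` is the
endpoint closer to `p` and `v'` the other one. -/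
def InDeepUmbra (u β p : ℝ) : Prop :=
  (∃ t : ℝ, sdelta (chordLen u (u + β)) ≤ t ∧ t ≤ β - sdelta (chordLen u (u + β)) ∧
    arcDist p (u + t) = 0) ∧
  (arcDist p u ≤ arcDist p (u + β) →
    arcDist p (u + β) ≤ chordLen p u + chordLen u (u + β)) ∧
  (arcDist p (u + β) ≤ arcDist p u →
    arcDist p u ≤ chordLen p (u + β) + chordLen u (u + β))

/-- `d` equals δ*_k : for `k ∈ {3,4,5}` this is `δ(a*_k)` where `a*_k + δ(a*_k) = (k-1)π/k`,
and for `k = 6` it is `δ(2) = π/2 - 1`. -/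
def dstarSpec (k : ℕ) (d : ℝ) : Prop :=
  (k = 6 ∧ d = sdelta 2) ∨
    (∃ a, a ∈ Set.Icc (0 : ℝ) 2 ∧ a + sdelta a = ((k : ℝ) - 1) * π / k ∧ d = sdelta a)

lemma arcsin_sconv : StrictConvexOn ℝ (Set.Icc (0:ℝ) 1) Real.arcsin := by
  apply StrictMonoOn.strictConvexOn_of_deriv (convex_Icc 0 1)
    Real.continuous_arcsin.continuousOn
  rw [interior_Icc, Real.deriv_arcsin]
  intro x hx y hy hxy
  have hx0 : (0:ℝ) < 1 - y^2 := by nlinarith [hx.1, hx.2, hy.1, hy.2]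
  have h1 : Real.sqrt (1 - y^2) < Real.sqrt (1 - x^2) := by
    apply Real.sqrt_lt_sqrt (le_of_lt hx0)
    nlinarith [hx.1, hy.1]
  have h2 : (0:ℝ) < Real.sqrt (1 - y^2) := Real.sqrt_pos.2 hx0
  exact one_div_lt_one_div_of_lt h2 h1

lemma sdelta_sconv : StrictConvexOn ℝ (Set.Icc (0:ℝ) 2) sdelta := by
  constructor
  · exact convex_Icc 0 2
  · intro x hx y hy hxy p q hp hq hpq
    have hx' : x / 2 ∈ Set.Icc (0:ℝ) 1 := ⟨by linarith [hx.1], by linarith [hx.2]⟩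
    have hy' : y / 2 ∈ Set.Icc (0:ℝ) 1 := ⟨by linarith [hy.1], by linarith [hy.2]⟩
    have hne : x / 2 ≠ y / 2 := fun h => hxy (by linarith [h])
    have := arcsin_sconv.2 hx' hy' hne hp hq hpq
    simp only [smul_eq_mul] at this ⊢
    have harg : (p * x + q * y) / 2 = p * (x/2) + q * (y/2) := by ring
    simp only [sdelta, harg]
    linarith

lemma sdelta_zero : sdelta 0 = 0 := by simp [sdelta]

lemma sdelta_nonneg {x : ℝ} (h0 : 0 ≤ x) (h2 : x ≤ 2) : 0 ≤ sdelta x := by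
  have h1 : x / 2 ≤ Real.arcsin (x / 2) := by
    have := Real.sin_le (Real.arcsin_nonneg.2 (by linarith : (0:ℝ) ≤ x/2))
    rwa [Real.sin_arcsin (by linarith) (by linarith)] at this
  simp only [sdelta]; linarith

lemma slope_lt {s t : ℝ} (hs : 0 < s) (hst : s < t) (ht : t ≤ 2) :
    t * sdelta s < s * sdelta t := by
  have h0 : (0:ℝ) ∈ Set.Icc (0:ℝ) 2 := by norm_num
  have htm : t ∈ Set.Icc (0:ℝ) 2 := ⟨by linarith, ht⟩
  have hp : 0 < 1 - s / t := by
    rw [sub_pos, div_lt_one (by linarith)]; exact hst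
  have hq : 0 < s / t := div_pos hs (by linarith)
  have := sdelta_sconv.2 h0 htm (by intro h; exact absurd h.symm (ne_of_gt (by linarith))) hp hq (by ring)
  simp only [smul_eq_mul, mul_zero, zero_add, sdelta_zero, mul_zero] at this
  have ht0 : (0:ℝ) < t := by linarith
  have : sdelta (s / t * t) < s / t * sdelta t := by linarith
  rw [div_mul_cancel₀ _ (ne_of_gt ht0)] at this
  calc t * sdelta s < t * (s / t * sdelta t) := by
        exact mul_lt_mul_of_pos_left this ht0
    _ = s * sdelta t := by field_simp


lemma slope_le {s t : ℝ} (hs : 0 < s) (hst : s ≤ t) (ht : t ≤ 2) :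
    t * sdelta s ≤ s * sdelta t := by
  rcases eq_or_lt_of_le hst with h | h
  · rw [h]
  · exact (slope_lt hs h ht).le

lemma sdelta_mono {s t : ℝ} (hs : 0 ≤ s) (hst : s ≤ t) (ht : t ≤ 2) :
    sdelta s ≤ sdelta t := by
  rcases eq_or_lt_of_le hs with h | h
  · rw [← h, sdelta_zero]; exact sdelta_nonneg (by linarith) ht
  · have h1 := slope_le h hst ht
    have h2 : 0 ≤ sdelta t := sdelta_nonneg (by linarith) ht
    nlinarith

lemma sum_sdelta_le {n : ℕ} (T : Finset (Fin n)) (a : Fin n → ℝ)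
    (hpos : ∀ i ∈ T, 0 < a i) (hB : ∑ i ∈ T, a i ≤ 2) :
    ∑ i ∈ T, sdelta (a i) ≤ sdelta (∑ i ∈ T, a i) := by
  set B := ∑ i ∈ T, a i with hBdef
  rcases T.eq_empty_or_nonempty with rfl | hne
  · simp [hBdef, sdelta_zero]
  · have hB0 : 0 < B := Finset.sum_pos hpos hne
    have hterm : ∀ i ∈ T, B * sdelta (a i) ≤ a i * sdelta B := by
      intro i hi
      have hile : a i ≤ B := Finset.single_le_sum (fun j hj => (hpos j hj).le) hi
      exact slope_le (hpos i hi) hile hB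
    have hsum : ∑ i ∈ T, B * sdelta (a i) ≤ ∑ i ∈ T, a i * sdelta B :=
      Finset.sum_le_sum hterm
    rw [← Finset.mul_sum, ← Finset.sum_mul, ← hBdef] at hsum
    exact le_of_mul_le_mul_left (by linarith) hB0

set_option maxHeartbeats 1000000 in
/-- lengths of shortcuts used by an antipodal pair. For `k ∈ {4,5,6}`,
if `a₁ ≥ … ≥ a_n` lie in `(0,2]` with `∑ aᵢ ≤ π - δ*_k` and `∑ δ(aᵢ) ≥ δ*_k/2`, then
`a₁ ≥ λ_k` and `a₂ + ⋯ + a_n ≤ σ_k`. -/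
theorem stmt18 (k : ℕ) (hk : k ∈ ({4, 5, 6} : Set ℕ)) (dstar sig lam : ℝ)
    (hd : dstarSpec k dstar)
    (hsig : sig ∈ Set.Icc (π - dstar - 2) 2)
    (hlam : lam ∈ Set.Icc (π - dstar - 2) 2)
    (hsl : sig < lam) (hsum : sig + lam = π - dstar)
    (hgs : sdelta sig + sdelta (π - dstar - sig) = dstar / 2)
    (hgl : sdelta lam + sdelta (π - dstar - lam) = dstar / 2)
    (n : ℕ) (hn : 0 < n) (a : Fin n → ℝ) (hmono : Antitone a)
    (hrange : ∀ i, a i ∈ Set.Ioc (0 : ℝ) 2)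
    (htotal : ∑ i, a i ≤ π - dstar)
    (hdelta : dstar / 2 ≤ ∑ i, sdelta (a i)) :
    lam ≤ a ⟨0, hn⟩ ∧ ∑ i ∈ Finset.univ.erase ⟨0, hn⟩, a i ≤ sig := by
  obtain ⟨hsig1, hsig2⟩ := hsig
  obtain ⟨hlam1, hlam2⟩ := hlam
  have hpi : (3:ℝ) < π := Real.pi_gt_three
  have hd2 : sdelta 2 = π / 2 - 1 := by norm_num [sdelta, Real.arcsin_one]
  have hdub : dstar ≤ π / 2 - 1 := by
    rcases hd with ⟨_, h⟩ | ⟨a0, ha0, _, h⟩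
    · rw [h, hd2]
    · rw [h, ← hd2]; exact sdelta_mono ha0.1 ha0.2 le_rfl
  have hsig0 : 0 < sig := by linarith
  have hlam0 : 0 < lam := lt_trans hsig0 hsl
  have hls : π - dstar - sig = lam := by linarith
  rw [hls] at hgs
  set i0 : Fin n := ⟨0, hn⟩ with hi0
  have hai : ∀ i, a i ≤ a i0 := fun i => hmono (by simp [hi0, Fin.le_def])
  obtain ⟨ha1pos, ha1le2⟩ := hrange i0
  have hsplit : a i0 + ∑ i ∈ Finset.univ.erase i0, a i = ∑ i, a i :=
    Finset.add_sum_erase _ _ (Finset.mem_univ i0)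
  have hsplitd : sdelta (a i0) + ∑ i ∈ Finset.univ.erase i0, sdelta (a i)
      = ∑ i, sdelta (a i) :=
    Finset.add_sum_erase _ (fun i => sdelta (a i)) (Finset.mem_univ i0)
  have hB0 : 0 ≤ ∑ i ∈ Finset.univ.erase i0, a i :=
    Finset.sum_nonneg (fun i _ => (hrange i).1.le)
  have hmain : lam ≤ a i0 := by
    by_contra hcon
    push_neg at hcon
    rcases le_or_gt (a i0) sig with hc1 | hc2
    · -- a i0 ≤ sig
      have hterm : ∀ i ∈ Finset.univ, a i0 * sdelta (a i) ≤ a i * sdelta (a i0) :=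
        fun i _ => slope_le (hrange i).1 (hai i) ha1le2
      have hsum1 : a i0 * ∑ i, sdelta (a i) ≤ (∑ i, a i) * sdelta (a i0) := by
        rw [Finset.mul_sum, Finset.sum_mul]; exact Finset.sum_le_sum hterm
      have hs1 : 0 ≤ sdelta (a i0) := sdelta_nonneg ha1pos.le ha1le2
      have hA : ∑ i, a i ≤ sig + lam := by rw [hsum]; exact htotal
      have h1 : a i0 * (dstar/2) ≤ (sig + lam) * sdelta (a i0) :=
        calc a i0 * (dstar/2) ≤ a i0 * ∑ i, sdelta (a i) :=
              mul_le_mul_of_nonneg_left hdelta ha1pos.le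
          _ ≤ (∑ i, a i) * sdelta (a i0) := hsum1
          _ ≤ (sig + lam) * sdelta (a i0) := mul_le_mul_of_nonneg_right hA hs1
      have h2 : sig * sdelta (a i0) ≤ a i0 * sdelta sig := slope_le ha1pos hc1 hsig2
      have h3 : lam * sdelta sig < sig * sdelta lam := slope_lt hsig0 hsl hlam2
      have hgs2 : a i0 * (sig * (sdelta sig + sdelta lam))
          = a i0 * (sig * (dstar / 2)) := by rw [hgs]
      nlinarith [mul_le_mul_of_nonneg_left h1 hsig0.le,
        mul_le_mul_of_nonneg_left h2 (by linarith : (0:ℝ) ≤ sig + lam),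
        mul_lt_mul_of_pos_left h3 ha1pos, hgs2]
    · -- sig < a i0 < lam
      have hBle : ∑ i ∈ Finset.univ.erase i0, a i ≤ sig + lam - a i0 := by
        linarith
      have hB2 : ∑ i ∈ Finset.univ.erase i0, a i ≤ 2 := by linarith
      have htail : ∑ i ∈ Finset.univ.erase i0, sdelta (a i)
          ≤ sdelta (∑ i ∈ Finset.univ.erase i0, a i) :=
        sum_sdelta_le _ _ (fun i _ => (hrange i).1) hB2
      have hdB : sdelta (∑ i ∈ Finset.univ.erase i0, a i)
          ≤ sdelta (sig + lam - a i0) := sdelta_mono hB0 hBle (by linarith)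
      have hmid : dstar/2 ≤ sdelta (a i0) + sdelta (sig + lam - a i0) := by
        linarith
      have hlsig : (0:ℝ) < lam - sig := by linarith
      set p := (lam - a i0) / (lam - sig) with hp_def
      set q := (a i0 - sig) / (lam - sig) with hq_def
      have hp : 0 < p := div_pos (by linarith) hlsig
      have hq : 0 < q := div_pos (by linarith) hlsig
      have hpq : p + q = 1 := by
        rw [hp_def, hq_def, ← add_div, div_eq_one_iff_eq (ne_of_gt hlsig)]
        ring
      have hmem_s : sig ∈ Set.Icc (0:ℝ) 2 := ⟨hsig0.le, hsig2⟩
      have hmem_l : lam ∈ Set.Icc (0:ℝ) 2 := ⟨hlam0.le, hlam2⟩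
      have hne : sig ≠ lam := ne_of_lt hsl
      have hc1' := sdelta_sconv.2 hmem_s hmem_l hne hp hq hpq
      have hc2' := sdelta_sconv.2 hmem_s hmem_l hne hq hp (by linarith)
      simp only [smul_eq_mul] at hc1' hc2'
      have e1 : p * sig + q * lam = a i0 := by
        rw [hp_def, hq_def]; field_simp; ring
      have e2 : q * sig + p * lam = sig + lam - a i0 := by
        rw [hp_def, hq_def]; field_simp; ring
      rw [e1] at hc1'
      rw [e2] at hc2'
      have key : (p + q) * (sdelta sig + sdelta lam) = dstar / 2 := by
        rw [hpq, one_mul, hgs]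
      have expand : p * sdelta sig + q * sdelta lam + (q * sdelta sig + p * sdelta lam)
          = (p + q) * (sdelta sig + sdelta lam) := by ring
      linarith [hmid, hc1', hc2', expand, key]
  refine ⟨hmain, ?_⟩
  linarith
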